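/- Let n ≥ 4 be an integer with n not divisible by 3, and let G be the graph on vertices v_1, …, v_n whose edges are v_iv_{i+1} for 1 ≤ i ≤ n−1 and v_iv_{i+2} for 1 ≤ i ≤ n−2 (the square of a path). Let L be a list assignment with |L(v)| ≥ 2 for v ∈ {v_1, v_{n−1}, v_n} and |L(v)| ≥ 3 for every other vertex v. Then G has a proper L-coloring. -/

import Mathlib

namespace PSqAux

/-- `ok n L i f` : `f` properly colors vertices `i, i+1, …, n-1` from the lists `L`. -/
def ok (n : ℕ) (L : ℕ → Finset ℕ) (i : ℕ) (f : ℕ → ℕ) : Prop :=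
  (∀ j, i ≤ j → j < n → f j ∈ L j) ∧
  (∀ j, i ≤ j → j + 1 < n → f j ≠ f (j+1)) ∧
  (∀ j, i ≤ j → j + 2 < n → f j ≠ f (j+2))

/-- there is a proper coloring of the tail starting at `i` whose first two values are `a, b`. -/
def Ext (n : ℕ) (L : ℕ → Finset ℕ) (i a b : ℕ) : Prop :=
  ∃ f : ℕ → ℕ, f i = a ∧ f (i+1) = b ∧ ok n L i f

theorem ext_base {n : ℕ} {L : ℕ → Finset ℕ} {a b : ℕ} (hn : 4 ≤ n)
    (ha : a ∈ L (n-2)) (hb : b ∈ L (n-1)) (hab : a ≠ b) : Ext n L (n-2) a b := by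
  refine ⟨fun j => if j = n-2 then a else b, by simp, ?_, ?_, ?_, ?_⟩
  · have : n-2+1 ≠ n-2 := by omega
    simp [this]
  · intro j hij hjn
    rcases (by omega : j = n-2 ∨ j = n-1) with h | h
    · simpa [h] using ha
    · have h2 : n - 1 ≠ n - 2 := by omega
      show (if j = n - 2 then a else b) ∈ L j
      rw [h, if_neg h2]; exact hb
  · intro j hij hjn
    have hj : j = n-2 := by omega
    have h1 : j+1 ≠ n-2 := by omega
    simpa [hj, h1] using hab
  · intro j hij hjn
    omega

theorem ext_cons {n : ℕ} {L : ℕ → Finset ℕ} {i a b c : ℕ}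
    (h3 : i + 3 ≤ n) (hE : Ext n L (i+1) b c)
    (ha : a ∈ L i) (hab : a ≠ b) (hac : a ≠ c) : Ext n L i a b := by
  obtain ⟨f, hfb, hfc, hmem, hadj, hdist⟩ := hE
  refine ⟨fun j => if j = i then a else f j, by simp, ?_, ?_, ?_, ?_⟩
  · have : i+1 ≠ i := by omega
    simp [this, hfb]
  · intro j hij hjn
    by_cases hj : j = i
    · simpa [hj] using ha
    · simpa [hj] using hmem j (by omega) hjn
  · intro j hij hjn
    by_cases hj : j = i
    · have h1 : j + 1 ≠ i := by omega
      simpa [hj, h1, hfb] using hab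
    · have h1 : j + 1 ≠ i := by omega
      simpa [hj, h1] using hadj j (by omega) hjn
  · intro j hij hjn
    by_cases hj : j = i
    · have h1 : j + 2 ≠ i := by omega
      have hc : f (j+2) = c := by rw [hj]; exact hfc
      show (if j = i then a else f j) ≠ (if j + 2 = i then a else f (j+2))
      rw [if_pos hj, if_neg h1, hc]; exact hac
    · have h1 : j + 2 ≠ i := by omega
      simpa [hj, h1] using hdist j (by omega) hjn

theorem ext_props {n : ℕ} {L : ℕ → Finset ℕ} {i a b : ℕ}
    (h2 : i + 2 ≤ n) (hE : Ext n L i a b) :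
    a ∈ L i ∧ b ∈ L (i+1) ∧ a ≠ b := by
  obtain ⟨f, hfa, hfb, hmem, hadj, _⟩ := hE
  refine ⟨hfa ▸ hmem i le_rfl (by omega), hfb ▸ hmem (i+1) (by omega) (by omega), ?_⟩
  rw [← hfa, ← hfb]; exact hadj i le_rfl (by omega)


/-- "escaped" state: two extendable pairs with distinct firsts, distinct seconds,
and distinct underlying 2-sets. -/
def Th (n : ℕ) (L : ℕ → Finset ℕ) (i : ℕ) : Prop :=
  ∃ a b a' b', Ext n L i a b ∧ Ext n L i a' b' ∧ a ≠ a' ∧ b ≠ b' ∧ ¬(a = b' ∧ b = a')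

def Pa (n : ℕ) (L : ℕ → Finset ℕ) (i : ℕ) : Prop :=
  ∃ x y, x ≠ y ∧ Ext n L i x y ∧ Ext n L i y x

def Pb (n : ℕ) (L : ℕ → Finset ℕ) (i : ℕ) : Prop :=
  ∃ z x y, x ≠ y ∧ Ext n L i z x ∧ Ext n L i z y

def Pc (n : ℕ) (L : ℕ → Finset ℕ) (i : ℕ) : Prop :=
  ∃ x y z, x ≠ y ∧ Ext n L i x z ∧ Ext n L i y z

theorem pick_ne {S : Finset ℕ} (h : 2 ≤ S.card) (x : ℕ) : ∃ a ∈ S, a ≠ x := by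
  have h2 : 0 < (S \ {x}).card := by
    have := Finset.le_card_sdiff ({x} : Finset ℕ) S
    simp only [Finset.card_singleton] at this
    omega
  obtain ⟨a, ha⟩ := Finset.card_pos.mp h2
  simp only [Finset.mem_sdiff, Finset.mem_singleton] at ha
  exact ⟨a, ha.1, ha.2⟩

theorem pick_ne2 {S : Finset ℕ} (h : 3 ≤ S.card) (x y : ℕ) :
    ∃ a ∈ S, a ≠ x ∧ a ≠ y := by
  have h1 : ({x, y} : Finset ℕ).card ≤ 2 :=
    (Finset.card_insert_le _ _).trans (by simp)
  have h2 : 0 < (S \ {x, y}).card := by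
    have := Finset.le_card_sdiff ({x, y} : Finset ℕ) S
    omega
  obtain ⟨a, ha⟩ := Finset.card_pos.mp h2
  simp only [Finset.mem_sdiff, Finset.mem_insert, Finset.mem_singleton] at ha
  exact ⟨a, ha.1, by tauto, by tauto⟩

theorem two_mem {S : Finset ℕ} (h : 2 ≤ S.card) :
    ∃ a ∈ S, ∃ b ∈ S, a ≠ b := Finset.one_lt_card.mp (by omega)

theorem pick_two_ne {S : Finset ℕ} (h : 3 ≤ S.card) (z : ℕ) :
    ∃ a ∈ S, ∃ b ∈ S, a ≠ b ∧ a ≠ z ∧ b ≠ z := by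
  have h2 : 2 ≤ (S \ {z}).card := by
    have := Finset.le_card_sdiff ({z} : Finset ℕ) S
    simp only [Finset.card_singleton] at this
    omega
  obtain ⟨a, ha, b, hb, hab⟩ := two_mem h2
  simp only [Finset.mem_sdiff, Finset.mem_singleton] at ha hb
  exact ⟨a, ha.1, b, hb.1, hab, ha.2, hb.2⟩

/-- If `S ⊆ {x,y,z}` (given elementwise), `x,y,z` distinct and `3 ≤ S.card`, then `S = {x,y,z}`. -/
theorem eq_three {S : Finset ℕ} {x y z : ℕ} (h : 3 ≤ S.card)
    (hsub : ∀ w ∈ S, w = x ∨ w = y ∨ w = z) :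
    x ∈ S ∧ y ∈ S ∧ z ∈ S := by
  have hs : S ⊆ {x, y, z} := by
    intro w hw
    simp only [Finset.mem_insert, Finset.mem_singleton]
    exact hsub w hw
  have hcard : ({x, y, z} : Finset ℕ).card ≤ S.card := by
    refine le_trans ?_ h
    exact (Finset.card_insert_le _ _).trans (by
      simpa using Nat.add_le_add_right (((Finset.card_insert_le y {z}).trans (by simp) : ({y, z} : Finset ℕ).card ≤ 2)) 1)
  have := Finset.eq_of_subset_of_card_le hs hcard
  rw [this]
  simp


section Steps
variable {n : ℕ} {L : ℕ → Finset ℕ} {i : ℕ}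

theorem step_a (h3 : i + 3 ≤ n) (hcard : 3 ≤ (L i).card)
    (h : Pa n L (i+1)) : Pb n L i := by
  obtain ⟨x, y, hxy, hExy, hEyx⟩ := h
  obtain ⟨z, hz, hzx, hzy⟩ := pick_ne2 hcard x y
  exact ⟨z, x, y, hxy, ext_cons h3 hExy hz hzx hzy, ext_cons h3 hEyx hz hzy hzx⟩

theorem step_b (h3 : i + 3 ≤ n) (hcard : 3 ≤ (L i).card)
    (h : Pb n L (i+1)) : Pc n L i := by
  obtain ⟨z, x, y, hxy, hEzx, hEzy⟩ := h
  have hzx : z ≠ x := (ext_props (by omega) hEzx).2.2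
  have hzy : z ≠ y := (ext_props (by omega) hEzy).2.2
  obtain ⟨u, hu, v, hv, huv, huz, hvz⟩ := pick_two_ne hcard z
  -- need a ∈ L i, a∉{z,x} and b ∈ L i, b∉{z,y}, a ≠ b
  have key : ∃ a ∈ L i, ∃ b ∈ L i, a ≠ b ∧ a ≠ z ∧ a ≠ x ∧ b ≠ z ∧ b ≠ y := by
    by_cases hux : u = x
    · exact ⟨v, hv, u, hu, Ne.symm huv, hvz, by omega, huz, by omega⟩
    · by_cases hvx : v = x
      · exact ⟨u, hu, v, hv, huv, huz, hux, hvz, by omega⟩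
      · by_cases huy : u = y
        · exact ⟨u, hu, v, hv, huv, huz, hux, hvz, by omega⟩
        · exact ⟨v, hv, u, hu, fun h => huv h.symm, hvz, hvx, huz, huy⟩
  obtain ⟨a, ha, b, hb, hab, haz, hax, hbz, hby⟩ := key
  exact ⟨a, b, z, hab, ext_cons h3 hEzx ha haz hax, ext_cons h3 hEzy hb hbz hby⟩

theorem step_c (h3 : i + 3 ≤ n) (hcard : 3 ≤ (L i).card)
    (h : Pc n L (i+1)) : Th n L i ∨ Pa n L i := by
  obtain ⟨x, y, z, hxy, hExz, hEyz⟩ := h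
  have hxz : x ≠ z := (ext_props (by omega) hExz).2.2
  have hyz : y ≠ z := (ext_props (by omega) hEyz).2.2
  by_cases hA : ∃ a ∈ L i, a ≠ x ∧ a ≠ y ∧ a ≠ z
  · obtain ⟨a, ha, hax, hay, haz⟩ := hA
    by_cases hB : ∃ b ∈ L i, b ≠ y ∧ b ≠ z ∧ b ≠ a
    · obtain ⟨b, hb, hby, hbz, hba⟩ := hB
      exact Or.inl ⟨a, x, b, y, ext_cons h3 hExz ha hax haz,
        ext_cons h3 hEyz hb hby hbz, fun h => hba h.symm, hxy, fun h => hay h.1⟩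
    · push_neg at hB
      have hmem := eq_three hcard (fun w hw => by
        rcases eq_or_ne w y with h | h1
        · exact Or.inl h
        rcases eq_or_ne w z with h | h2
        · exact Or.inr (Or.inl h)
        · exact Or.inr (Or.inr (hB w hw h1 h2)))
      obtain ⟨hyL, hzL, haL⟩ := hmem
      exact Or.inl ⟨y, x, a, y, ext_cons h3 hExz hyL (fun h => hxy h.symm) hyz,
        ext_cons h3 hEyz haL hay haz, Ne.symm hay, hxy,
        fun h => hax h.2.symm⟩
  · push_neg at hA
    have hmem := eq_three hcard (fun w hw => by
      rcases eq_or_ne w x with h | h1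
      · exact Or.inl h
      rcases eq_or_ne w y with h | h2
      · exact Or.inr (Or.inl h)
      · exact Or.inr (Or.inr (hA w hw h1 h2)))
    obtain ⟨hxL, hyL, hzL⟩ := hmem
    exact Or.inr ⟨x, y, hxy, ext_cons h3 hEyz hxL hxy hxz,
      ext_cons h3 hExz hyL (fun h => hxy h.symm) hyz⟩

theorem step_t (h3 : i + 3 ≤ n) (hcard : 3 ≤ (L i).card)
    (h : Th n L (i+1)) : Th n L i := by
  obtain ⟨p1, p2, q1, q2, hp, hq, h1, h2, hbad⟩ := h
  have hp12 : p1 ≠ p2 := (ext_props (by omega) hp).2.2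
  have hq12 : q1 ≠ q2 := (ext_props (by omega) hq).2.2
  by_cases hA : ∃ a ∈ L i, a ≠ p1 ∧ a ≠ p2 ∧ a ≠ q1
  · obtain ⟨a, ha, hap1, hap2, haq1⟩ := hA
    by_cases hB : ∃ b ∈ L i, b ≠ q1 ∧ b ≠ q2 ∧ b ≠ a
    · obtain ⟨b, hb, hbq1, hbq2, hba⟩ := hB
      exact ⟨a, p1, b, q1, ext_cons h3 hp ha hap1 hap2,
        ext_cons h3 hq hb hbq1 hbq2, fun h => hba h.symm, h1,
        fun h => haq1 h.1⟩
    · push_neg at hB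
      have haq2 : a ≠ q2 := by
        intro heq
        have hsub : L i ⊆ {q1, q2} := by
          intro w hw
          simp only [Finset.mem_insert, Finset.mem_singleton]
          rcases eq_or_ne w q1 with h | hw1
          · exact Or.inl h
          rcases eq_or_ne w q2 with h | hw2
          · exact Or.inr h
          · exact Or.inr ((hB w hw hw1 hw2).trans heq)
        have := Finset.card_le_card hsub
        have h2' : ({q1, q2} : Finset ℕ).card ≤ 2 :=
          (Finset.card_insert_le _ _).trans (by simp)
        omega
      have hmem := eq_three hcard (fun w hw => by
        rcases eq_or_ne w q1 with h | hw1
        · exact Or.inl h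
        rcases eq_or_ne w q2 with h | hw2
        · exact Or.inr (Or.inl h)
        · exact Or.inr (Or.inr (hB w hw hw1 hw2)))
      obtain ⟨hq1L, hq2L, haL⟩ := hmem
      by_cases hq2p1 : q2 = p1
      · by_cases hq1p2 : q1 = p2
        · exact absurd ⟨hq2p1.symm, hq1p2.symm⟩ hbad
        · -- pairs (q1, p1), (a, q1)
          exact ⟨q1, p1, a, q1, ext_cons h3 hp hq1L (fun h => h1 h.symm)
            (fun h => hq1p2 h), ext_cons h3 hq haL haq1 haq2,
            Ne.symm haq1, h1, fun h => hap1 h.2.symm⟩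
      · -- q2 ∉ {p1, p2}: pairs (q2, p1), (a, q1)
        exact ⟨q2, p1, a, q1, ext_cons h3 hp hq2L hq2p1
          (fun h => h2 h.symm), ext_cons h3 hq haL haq1 haq2,
          Ne.symm haq2, h1, fun h => hq12.symm h.1⟩
  · push_neg at hA
    have hp2q1 : p2 ≠ q1 := by
      intro heq
      have hsub : L i ⊆ {p1, p2} := by
        intro w hw
        simp only [Finset.mem_insert, Finset.mem_singleton]
        rcases eq_or_ne w p1 with h | hw1
        · exact Or.inl h
        rcases eq_or_ne w p2 with h | hw2
        · exact Or.inr h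
        · exact Or.inr ((hA w hw hw1 hw2).trans heq.symm)
      have := Finset.card_le_card hsub
      have h2' : ({p1, p2} : Finset ℕ).card ≤ 2 :=
        (Finset.card_insert_le _ _).trans (by simp)
      omega
    have hmem := eq_three hcard (fun w hw => by
      rcases eq_or_ne w p1 with h | hw1
      · exact Or.inl h
      rcases eq_or_ne w p2 with h | hw2
      · exact Or.inr (Or.inl h)
      · exact Or.inr (Or.inr (hA w hw hw1 hw2)))
    obtain ⟨hp1L, hp2L, hq1L⟩ := hmem
    -- pairs (q1, p1), (p2, q1)
    exact ⟨q1, p1, p2, q1, ext_cons h3 hp hq1L (fun h => h1 h.symm)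
      (fun h => hp2q1 h.symm), ext_cons h3 hq hp2L hp2q1 h2,
      fun h => hp2q1 (h.symm), h1, fun h => hp12 h.2⟩

end Steps


theorem base_inv {n : ℕ} {L : ℕ → Finset ℕ} (hn : 4 ≤ n)
    (hX : 2 ≤ (L (n-2)).card) (hY : 2 ≤ (L (n-1)).card) :
    Th n L (n-2) ∨ Pa n L (n-2) := by
  set X := L (n-2) with hXdef
  set Y := L (n-1) with hYdef
  by_cases hint : 2 ≤ (X ∩ Y).card
  · obtain ⟨u, hu, v, hv, huv⟩ := two_mem hint
    simp only [Finset.mem_inter] at hu hv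
    exact Or.inr ⟨u, v, huv, ext_base hn hu.1 hv.2 huv,
      ext_base hn hv.1 hu.2 (Ne.symm huv)⟩
  · left
    obtain ⟨x1, hx1, x2, hx2, hx12⟩ := two_mem hX
    obtain ⟨y1, hy1, y2, hy2, hy12⟩ := two_mem hY
    rcases Finset.eq_empty_or_nonempty (X ∩ Y) with hemp | ⟨t, ht⟩
    · have hdisj : ∀ a ∈ X, ∀ b ∈ Y, a ≠ b := by
        intro a ha b hb heq
        have : a ∈ X ∩ Y := Finset.mem_inter.mpr ⟨ha, heq ▸ hb⟩
        simp [hemp] at this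
      exact ⟨x1, y1, x2, y2, ext_base hn hx1 hy1 (hdisj _ hx1 _ hy1),
        ext_base hn hx2 hy2 (hdisj _ hx2 _ hy2), hx12, hy12,
        fun h => hdisj _ hx1 _ hy2 h.1⟩
    · have htX : t ∈ X := (Finset.mem_inter.mp ht).1
      have htY : t ∈ Y := (Finset.mem_inter.mp ht).2
      have huniq : ∀ w ∈ X, w ∈ Y → w = t := by
        intro w hw hw'
        by_contra hne
        exact hint (Finset.one_lt_card.mpr
          ⟨w, Finset.mem_inter.mpr ⟨hw, hw'⟩, t, ht, hne⟩)
      -- get x ∈ X \ Y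
      have hxex : ∃ x ∈ X, x ∉ Y := by
        by_cases h1 : x1 ∈ Y
        · by_cases h2 : x2 ∈ Y
          · exact absurd ((huniq _ hx1 h1).trans (huniq _ hx2 h2).symm) hx12
          · exact ⟨x2, hx2, h2⟩
        · exact ⟨x1, hx1, h1⟩
      have hyex : ∃ y ∈ Y, y ∉ X := by
        by_cases h1 : y1 ∈ X
        · by_cases h2 : y2 ∈ X
          · exact absurd ((huniq _ h1 hy1).trans (huniq _ h2 hy2).symm) hy12
          · exact ⟨y2, hy2, h2⟩
        · exact ⟨y1, hy1, h1⟩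
      obtain ⟨x, hxX, hxY⟩ := hxex
      obtain ⟨y, hyY, hyX⟩ := hyex
      have hxy : x ≠ y := fun h => hxY (h ▸ hyY)
      have hxt : x ≠ t := fun h => hxY (h ▸ htY)
      have hyt : y ≠ t := fun h => hyX (h ▸ htX)
      by_cases hx' : ∃ x' ∈ X, x' ≠ x ∧ x' ≠ t
      · obtain ⟨x', hx'X, hx'x, hx't⟩ := hx'
        have hx'Y : x' ∉ Y := fun h => hx't (huniq _ hx'X h)
        exact ⟨x, y, x', t, ext_base hn hxX hyY hxy,
          ext_base hn hx'X htY hx't, fun h => hx'x h.symm,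
          fun h => hyX (h ▸ htX), fun h => hxt h.1⟩
      · by_cases hy' : ∃ y' ∈ Y, y' ≠ y ∧ y' ≠ t
        · obtain ⟨y', hy'Y, hy'y, hy't⟩ := hy'
          exact ⟨x, y, t, y', ext_base hn hxX hyY hxy,
            ext_base hn htX hy'Y (Ne.symm hy't), hxt,
            Ne.symm hy'y, fun h => hyt h.2⟩
        · exact ⟨x, t, t, y, ext_base hn hxX htY hxt,
            ext_base hn htX hyY (Ne.symm hyt), hxt, Ne.symm hyt,
            fun h => hxy h.1⟩


theorem invariant {n : ℕ} {L : ℕ → Finset ℕ} (hn : 4 ≤ n)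
    (hmid : ∀ i, 1 ≤ i → i ≤ n-3 → 3 ≤ (L i).card)
    (hX : 2 ≤ (L (n-2)).card) (hY : 2 ≤ (L (n-1)).card) :
    ∀ k, k ≤ n - 3 →
      (Th n L (n-2-k) ∨ (k % 3 = 0 ∧ Pa n L (n-2-k)) ∨
        (k % 3 = 1 ∧ Pb n L (n-2-k)) ∨ (k % 3 = 2 ∧ Pc n L (n-2-k))) := by
  intro k
  induction k with
  | zero =>
    intro _
    rcases base_inv hn hX hY with h | h
    · exact Or.inl (by simpa using h)
    · exact Or.inr (Or.inl ⟨rfl, by simpa using h⟩)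
  | succ k ih =>
    intro hk
    have hk' : k ≤ n - 3 := by omega
    have hstep : n - 2 - k = (n - 2 - (k+1)) + 1 := by omega
    set i := n - 2 - (k+1) with hidef
    rw [hstep] at ih
    have hi1 : 1 ≤ i := by omega
    have hi3 : i + 3 ≤ n := by omega
    have hcard : 3 ≤ (L i).card := hmid i hi1 (by omega)
    rcases ih hk' with h | ⟨hm, h⟩ | ⟨hm, h⟩ | ⟨hm, h⟩
    · exact Or.inl (step_t hi3 hcard h)
    · exact Or.inr (Or.inr (Or.inl ⟨by omega, step_a hi3 hcard h⟩))
    · exact Or.inr (Or.inr (Or.inr ⟨by omega, step_b hi3 hcard h⟩))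
    · rcases step_c hi3 hcard h with h' | h'
      · exact Or.inl h'
      · exact Or.inr (Or.inl ⟨by omega, h'⟩)

/-- From the invariant at vertex 1 (with phase ≠ 0) extract two extendable pairs
with distinct underlying 2-sets. -/
theorem good_pairs {n : ℕ} {L : ℕ → Finset ℕ} (hn : 4 ≤ n) (hn3 : ¬ (3 ∣ n))
    (hmid : ∀ i, 1 ≤ i → i ≤ n-3 → 3 ≤ (L i).card)
    (hX : 2 ≤ (L (n-2)).card) (hY : 2 ≤ (L (n-1)).card) :
    ∃ a b a' b', Ext n L 1 a b ∧ Ext n L 1 a' b' ∧ a ≠ b ∧ a' ≠ b' ∧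
      ¬(a = a' ∧ b = b') ∧ ¬(a = b' ∧ b = a') := by
  have h1 : n - 2 - (n - 3) = 1 := by omega
  have hmod : (n - 3) % 3 ≠ 0 := by omega
  have := invariant hn hmid hX hY (n-3) le_rfl
  rw [h1] at this
  rcases this with h | ⟨hm, h⟩ | ⟨hm, h⟩ | ⟨hm, h⟩
  · obtain ⟨a, b, a', b', hE, hE', hne1, hne2, hbad⟩ := h
    exact ⟨a, b, a', b', hE, hE', (ext_props (by omega) hE).2.2,
      (ext_props (by omega) hE').2.2, fun h => hne1 h.1, hbad⟩
  · exact absurd hm hmod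
  · obtain ⟨z, x, y, hxy, hE, hE'⟩ := h
    have hzx : z ≠ x := (ext_props (by omega) hE).2.2
    have hzy : z ≠ y := (ext_props (by omega) hE').2.2
    exact ⟨z, x, z, y, hE, hE', hzx, hzy, fun h => hxy h.2,
      fun h => hzy h.1⟩
  · obtain ⟨x, y, z, hxy, hE, hE'⟩ := h
    have hxz : x ≠ z := (ext_props (by omega) hE).2.2
    have hyz : y ≠ z := (ext_props (by omega) hE').2.2
    exact ⟨x, z, y, z, hE, hE', hxz, hyz, fun h => hxy h.1,
      fun h => hxz h.1⟩

theorem full_coloring {n : ℕ} {L : ℕ → Finset ℕ} (hn : 4 ≤ n) (hn3 : ¬ (3 ∣ n))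
    (h0 : 2 ≤ (L 0).card)
    (hmid : ∀ i, 1 ≤ i → i ≤ n-3 → 3 ≤ (L i).card)
    (hX : 2 ≤ (L (n-2)).card) (hY : 2 ≤ (L (n-1)).card) :
    ∃ f : ℕ → ℕ, ok n L 0 f := by
  obtain ⟨a, b, a', b', hE, hE', hab, hab', hbd1, hbd2⟩ :=
    good_pairs hn hn3 hmid hX hY
  have key : ∃ u ∈ L 0, ∃ p q, Ext n L 1 p q ∧ u ≠ p ∧ u ≠ q := by
    by_cases hA : ∃ u ∈ L 0, u ≠ a ∧ u ≠ b
    · obtain ⟨u, hu, h1, h2⟩ := hA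
      exact ⟨u, hu, a, b, hE, h1, h2⟩
    · push_neg at hA
      by_cases hB : ∃ u ∈ L 0, u ≠ a' ∧ u ≠ b'
      · obtain ⟨u, hu, h1, h2⟩ := hB
        exact ⟨u, hu, a', b', hE', h1, h2⟩
      · push_neg at hB
        exfalso
        obtain ⟨u, hu, v, hv, huv⟩ := two_mem h0
        have hu1 := hA u hu; have hv1 := hA v hv
        have hu2 := hB u hu; have hv2 := hB v hv
        -- u,v ∈ {a,b} ∩ {a',b'}, u ≠ v forces set equality
        have h1 : u = a ∨ u = b := by
          rcases eq_or_ne u a with h | h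
          · exact Or.inl h
          · exact Or.inr (hu1 h)
        have h2 : v = a ∨ v = b := by
          rcases eq_or_ne v a with h | h
          · exact Or.inl h
          · exact Or.inr (hv1 h)
        have h3 : u = a' ∨ u = b' := by
          rcases eq_or_ne u a' with h | h
          · exact Or.inl h
          · exact Or.inr (hu2 h)
        have h4 : v = a' ∨ v = b' := by
          rcases eq_or_ne v a' with h | h
          · exact Or.inl h
          · exact Or.inr (hv2 h)
        rcases h1 with h1 | h1 <;> rcases h2 with h2 | h2 <;>
          rcases h3 with h3 | h3 <;> rcases h4 with h4 | h4 <;>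
          first
            | omega
            | exact hbd1 ⟨by omega, by omega⟩
            | exact hbd2 ⟨by omega, by omega⟩
  obtain ⟨u, hu, p, q, hEpq, hup, huq⟩ := key
  obtain ⟨f, hf0, hf1, hok⟩ := ext_cons (by omega) hEpq hu hup huq
  exact ⟨f, hok⟩

end PSqAux


/-- The square of a path on `n` vertices `v_1, …, v_n` (here indexed by `Fin n`):
edges `v_i v_{i+1}` for `1 ≤ i ≤ n-1` and `v_i v_{i+2}` for `1 ≤ i ≤ n-2`. -/
def pathSquare (n : ℕ) : SimpleGraph (Fin n) :=
  SimpleGraph.fromRel (fun i j => j.val = i.val + 1 ∨ j.val = i.val + 2)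

/-- If `n ≥ 4` is not divisible by 3, and the lists of `v_1`, `v_{n-1}`, `v_n` have size at
least 2 while all other lists have size at least 3, then the square of the path on `n`
vertices has a proper coloring from the lists. -/
theorem pathSquare_choosable (n : ℕ) (hn : 4 ≤ n) (hn3 : ¬ (3 ∣ n))
    (L : Fin n → Finset ℕ)
    (hL2 : ∀ v : Fin n, 2 ≤ (L v).card)
    (hL3 : ∀ v : Fin n, v.val ≠ 0 → v.val ≠ n - 2 → v.val ≠ n - 1 → 3 ≤ (L v).card) :
    ∃ c : Fin n → ℕ, (∀ v, c v ∈ L v) ∧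
      ∀ a b, (pathSquare n).Adj a b → c a ≠ c b := by
  classical
  set L' : ℕ → Finset ℕ := fun j => if h : j < n then L ⟨j, h⟩ else ∅ with hL'def
  have hL'eq : ∀ j (h : j < n), L' j = L ⟨j, h⟩ := by
    intro j h
    simp [hL'def, h]
  have h0 : 2 ≤ (L' 0).card := by
    rw [hL'eq 0 (by omega)]; exact hL2 _
  have hmid : ∀ i, 1 ≤ i → i ≤ n-3 → 3 ≤ (L' i).card := by
    intro i hi1 hi2
    rw [hL'eq i (by omega)]
    exact hL3 _ (by simp; omega) (by simp; omega) (by simp; omega)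
  have hX : 2 ≤ (L' (n-2)).card := by
    rw [hL'eq (n-2) (by omega)]; exact hL2 _
  have hY : 2 ≤ (L' (n-1)).card := by
    rw [hL'eq (n-1) (by omega)]; exact hL2 _
  obtain ⟨f, hmem, hadj, hdist⟩ := PSqAux.full_coloring hn hn3 h0 hmid hX hY
  refine ⟨fun v => f v.val, ?_, ?_⟩
  · intro v
    have := hmem v.val (Nat.zero_le _) v.isLt
    rwa [hL'eq v.val v.isLt, Fin.eta] at this
  · intro a b hab
    rw [pathSquare, SimpleGraph.fromRel_adj] at hab
    show f (a : ℕ) ≠ f (b : ℕ)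
    obtain ⟨hne, h | h⟩ := hab <;> rcases h with h | h
    · have hb := b.isLt
      rw [show (b : ℕ) = (a : ℕ) + 1 from h]
      exact hadj a.val (Nat.zero_le _) (by omega)
    · have hb := b.isLt
      rw [show (b : ℕ) = (a : ℕ) + 2 from h]
      exact hdist a.val (Nat.zero_le _) (by omega)
    · have ha := a.isLt
      rw [show (a : ℕ) = (b : ℕ) + 1 from h]
      exact (hadj b.val (Nat.zero_le _) (by omega)).symm
    · have ha := a.isLt
      rw [show (a : ℕ) = (b : ℕ) + 2 from h]
      exact (hdist b.val (Nat.zero_le _) (by omega)).symm
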